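/- Let S be a finite nonempty set, κ : S → ℝ, and let T ⊆ S be nonempty. Then for every k with 1 ≤ k ≤ |T|, H_T(k) ≤ H_S(k), where H_T is the cluster structure function of T with respect to the restriction of κ to T. -/

import Mathlib

open Finset

/-- The bandwidth of a finite part `A`: the range `max κ - min κ` of the complexities over `A`
(equal to the range of the optimality deficiencies `δ(A,x) = c_A - κ x`). -/
noncomputable def band {α : Type*} (κ : α → ℝ) (A : Finset α) : ℝ :=
  if h : A.Nonempty then A.sup' h κ - A.inf' h κ else 0

/-- `P` is a partition of the finite set `S` into exactly `k` nonempty pairwise disjoint parts. -/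
def IsPartition {α : Type*} [DecidableEq α] (S : Finset α) (k : ℕ)
    (P : Finset (Finset α)) : Prop :=
  P.card = k ∧ (∀ A ∈ P, A.Nonempty) ∧
    (∀ A ∈ P, ∀ B ∈ P, A ≠ B → Disjoint A B) ∧ P.sup id = S

/-- The bandwidth criterion value of a partition: the sum of the bandwidths of its parts. -/
noncomputable def critVal {α : Type*} (κ : α → ℝ) (P : Finset (Finset α)) : ℝ :=
  ∑ A ∈ P, band κ A

/-- The cluster structure function: the minimal criterion value over all partitions of `S`
into exactly `k` nonempty parts. -/
noncomputable def csf {α : Type*} [DecidableEq α] (S : Finset α) (κ : α → ℝ) (k : ℕ) : ℝ :=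
  sInf {r : ℝ | ∃ P : Finset (Finset α), IsPartition S k P ∧ r = critVal κ P}

lemma band_nonneg {α : Type*} (κ : α → ℝ) (A : Finset α) : 0 ≤ band κ A := by
  unfold band
  split
  · next h =>
    have h1 := Finset.le_sup' κ h.choose_spec
    have h2 := Finset.inf'_le κ h.choose_spec
    linarith
  · exact le_refl 0

lemma band_mono {α : Type*} (κ : α → ℝ) {A B : Finset α} (hBA : B ⊆ A) :
    band κ B ≤ band κ A := by
  unfold band
  by_cases hB : B.Nonempty
  · have hA : A.Nonempty := hB.mono hBA
    rw [dif_pos hB, dif_pos hA]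
    have h1 : B.sup' hB κ ≤ A.sup' hA κ := Finset.sup'_le hB κ fun x hx => Finset.le_sup' κ (hBA hx)
    have h2 : A.inf' hA κ ≤ B.inf' hB κ := Finset.le_inf' hB κ fun x hx => Finset.inf'_le κ (hBA hx)
    linarith
  · rw [dif_neg hB]
    exact band_nonneg κ A

lemma band_singleton {α : Type*} (κ : α → ℝ) (x : α) : band κ {x} = 0 := by
  simp [band]

lemma mem_sup_iff {α : Type*} [DecidableEq α] (P : Finset (Finset α)) (x : α) :
    x ∈ P.sup id ↔ ∃ A ∈ P, x ∈ A := by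
  simp [Finset.mem_sup]

lemma exists_partition {α : Type*} [DecidableEq α] :
    ∀ (k : ℕ) (S : Finset α), 1 ≤ k → k ≤ S.card → ∃ P, IsPartition S k P := by
  intro k
  induction k with
  | zero => intro S h; omega
  | succ k ih =>
    intro S h1 h2
    rcases Nat.eq_zero_or_pos k with hk | hk
    · subst hk
      refine ⟨{S}, ?_, ?_, ?_, ?_⟩
      · simp
      · intro A hA; simp at hA; subst hA
        exact Finset.card_pos.mp (by omega)
      · intro A hA B hB hAB; simp at hA hB; subst hA; subst hB; exact absurd rfl hAB
      · simp
    · obtain ⟨x, hx⟩ : S.Nonempty := Finset.card_pos.mp (by omega)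
      have hcard : k ≤ (S.erase x).card := by
        rw [Finset.card_erase_of_mem hx]; omega
      obtain ⟨P, hPc, hPne, hPd, hPs⟩ := ih (S.erase x) hk hcard
      have hxsub : ∀ A ∈ P, A ⊆ S.erase x := by
        intro A hA; rw [← hPs]; exact Finset.le_sup (f := id) hA
      have hxnot : ({x} : Finset α) ∉ P := by
        intro hmem
        have := hxsub _ hmem (Finset.mem_singleton_self x)
        exact (Finset.mem_erase.mp this).1 rfl
      refine ⟨insert {x} P, ?_, ?_, ?_, ?_⟩
      · rw [Finset.card_insert_of_notMem hxnot, hPc]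
      · intro A hA
        rcases Finset.mem_insert.mp hA with h | h
        · subst h; exact Finset.singleton_nonempty x
        · exact hPne A h
      · intro A hA B hB hAB
        rcases Finset.mem_insert.mp hA with h | h <;>
          rcases Finset.mem_insert.mp hB with h' | h'
        · subst h; subst h'; exact absurd rfl hAB
        · subst h
          refine Finset.disjoint_left.mpr ?_
          intro a ha ha'
          rw [Finset.mem_singleton] at ha; subst ha
          exact (Finset.mem_erase.mp (hxsub _ h' ha')).1 rfl
        · subst h'
          refine Finset.disjoint_left.mpr ?_
          intro a ha ha'
          rw [Finset.mem_singleton] at ha'; subst ha'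
          exact (Finset.mem_erase.mp (hxsub _ h ha)).1 rfl
        · exact hPd A h B h' hAB
      · rw [Finset.sup_insert, hPs]
        simp [Finset.insert_eq, id, -Finset.singleton_union]
        ext a
        simp [Finset.mem_erase]
        constructor
        · rintro (rfl | ⟨_, h⟩)
          · exact hx
          · exact h
        · intro h
          by_cases ha : a = x
          · exact Or.inl ha
          · exact Or.inr ⟨ha, h⟩

lemma restrict_partition {α : Type*} [DecidableEq α] (κ : α → ℝ) {S T : Finset α}
    (hTS : T ⊆ S) (hT : T.Nonempty) {k : ℕ} {P : Finset (Finset α)}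
    (hP : IsPartition S k P) :
    ∃ j Q, 1 ≤ j ∧ j ≤ k ∧ IsPartition T j Q ∧ critVal κ Q ≤ critVal κ P := by
  obtain ⟨hPc, hPne, hPd, hPs⟩ := hP
  classical
  set F : Finset (Finset α) := P.filter (fun A => (A ∩ T).Nonempty) with hF
  have hinj : Set.InjOn (fun A => A ∩ T) F := by
    intro A hA B hB hAB
    simp only [hF, Finset.mem_coe, Finset.mem_filter] at hA hB
    by_contra hne
    have hd := hPd A hA.1 B hB.1 hne
    have : (A ∩ T) ∩ (B ∩ T) = ∅ := by
      apply Finset.eq_empty_of_forall_notMem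
      intro a ha
      simp only [Finset.mem_inter] at ha
      exact Finset.disjoint_left.mp hd ha.1.1 ha.2.1
    simp only at hAB
    rw [hAB, Finset.inter_self] at this
    exact hB.2.ne_empty this
  set Q : Finset (Finset α) := F.image (fun A => A ∩ T) with hQ
  refine ⟨Q.card, Q, ?_, ?_, ⟨rfl, ?_, ?_, ?_⟩, ?_⟩
  · -- Q nonempty: some part meets T
    obtain ⟨x, hx⟩ := hT
    have hxS : x ∈ S := hTS hx
    rw [← hPs, Finset.mem_sup] at hxS
    obtain ⟨A, hA, hxA⟩ := hxS
    have : A ∩ T ∈ Q := by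
      rw [hQ]
      exact Finset.mem_image_of_mem _ (Finset.mem_filter.mpr ⟨hA, ⟨x, Finset.mem_inter.mpr ⟨hxA, hx⟩⟩⟩)
    have : Q.Nonempty := ⟨_, this⟩
    exact Finset.card_pos.mpr this
  · calc Q.card ≤ F.card := Finset.card_image_le
      _ ≤ P.card := Finset.card_filter_le _ _
      _ = k := hPc
  · intro B hB
    rw [hQ, Finset.mem_image] at hB
    obtain ⟨A, hA, rfl⟩ := hB
    exact (Finset.mem_filter.mp hA).2
  · intro B hB C hC hBC
    rw [hQ, Finset.mem_image] at hB hC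
    obtain ⟨A, hA, rfl⟩ := hB
    obtain ⟨A', hA', rfl⟩ := hC
    have hAA' : A ≠ A' := fun h => hBC (by rw [h])
    exact Finset.disjoint_left.mpr fun a ha ha' =>
      Finset.disjoint_left.mp (hPd A (Finset.mem_filter.mp hA).1 A' (Finset.mem_filter.mp hA').1 hAA')
        (Finset.mem_inter.mp ha).1 (Finset.mem_inter.mp ha').1
  · ext a
    rw [Finset.mem_sup]
    constructor
    · rintro ⟨B, hB, haB⟩
      rw [hQ, Finset.mem_image] at hB
      obtain ⟨A, hA, rfl⟩ := hB
      exact (Finset.mem_inter.mp haB).2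
    · intro ha
      have haS : a ∈ S := hTS ha
      rw [← hPs, Finset.mem_sup] at haS
      obtain ⟨A, hA, haA⟩ := haS
      refine ⟨A ∩ T, ?_, Finset.mem_inter.mpr ⟨haA, ha⟩⟩
      rw [hQ]
      exact Finset.mem_image_of_mem _ (Finset.mem_filter.mpr ⟨hA, ⟨a, Finset.mem_inter.mpr ⟨haA, ha⟩⟩⟩)
  · unfold critVal
    rw [hQ, Finset.sum_image (fun A hA B hB => hinj hA hB)]
    calc ∑ A ∈ F, band κ (A ∩ T) ≤ ∑ A ∈ F, band κ A :=
          Finset.sum_le_sum fun A _ => band_mono κ (Finset.inter_subset_left)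
      _ ≤ ∑ A ∈ P, band κ A :=
          Finset.sum_le_sum_of_subset_of_nonneg (Finset.filter_subset _ _)
            (fun A _ _ => band_nonneg κ A)

lemma card_sup_eq {α : Type*} [DecidableEq α] {P : Finset (Finset α)}
    (hPd : ∀ A ∈ P, ∀ B ∈ P, A ≠ B → Disjoint A B) :
    (P.sup id).card = ∑ A ∈ P, A.card := by
  rw [Finset.sup_eq_biUnion]
  exact Finset.card_biUnion fun A hA B hB h => hPd A hA B hB h

lemma refine_partition {α : Type*} [DecidableEq α] (κ : α → ℝ) {T : Finset α} {j : ℕ}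
    {P : Finset (Finset α)} (hP : IsPartition T j P) (hj : j < T.card) :
    ∃ Q, IsPartition T (j + 1) Q ∧ critVal κ Q ≤ critVal κ P := by
  obtain ⟨hPc, hPne, hPd, hPs⟩ := hP
  -- some part has card ≥ 2
  have hsum : ∑ A ∈ P, A.card = T.card := by rw [← hPs, card_sup_eq hPd]
  have hex : ∃ A ∈ P, 2 ≤ A.card := by
    by_contra h
    push_neg at h
    have : ∀ A ∈ P, A.card = 1 := by
      intro A hA
      have h1 := Finset.card_pos.mpr (hPne A hA)
      have h2 := h A hA
      omega
    have : ∑ A ∈ P, A.card = j := by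
      rw [Finset.sum_congr rfl this, Finset.sum_const, smul_eq_mul, mul_one, hPc]
    omega
  obtain ⟨A, hA, hA2⟩ := hex
  obtain ⟨x, hxA⟩ := Finset.card_pos.mp (by omega : 0 < A.card)
  set A' := A.erase x with hA'
  have hA'ne : A'.Nonempty := by
    rw [← Finset.card_pos, hA', Finset.card_erase_of_mem hxA]; omega
  have hA'sub : A' ⊆ A := Finset.erase_subset _ _
  have hA'neA : A' ≠ A := by
    intro h
    have : x ∈ A' := h ▸ hxA
    exact (Finset.mem_erase.mp this).1 rfl
  have hxsub : ∀ B ∈ P, B ⊆ T := by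
    intro B hB; rw [← hPs]; exact Finset.le_sup (f := id) hB
  -- new parts
  have hxA'not : x ∉ A' := Finset.notMem_erase x A
  have hsingA' : ({x} : Finset α) ≠ A' := by
    intro h
    exact hxA'not (h ▸ Finset.mem_singleton_self x)
  have hA'notP : A' ∉ P := by
    intro h
    have := hPd A' h A hA hA'neA
    obtain ⟨y, hy⟩ := hA'ne
    exact Finset.disjoint_left.mp this hy (hA'sub hy)
  have hsingP : ({x} : Finset α) ∉ P := by
    intro h
    have hne : ({x} : Finset α) ≠ A := by
      intro heq
      have : A.card = 1 := by rw [← heq]; simp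
      omega
    have := hPd _ h A hA hne
    exact Finset.disjoint_left.mp this (Finset.mem_singleton_self x) hxA
  set Q := insert ({x} : Finset α) (insert A' (P.erase A)) with hQ
  have hA'notE : A' ∉ P.erase A := fun h => hA'notP (Finset.mem_of_mem_erase h)
  have hsingnotE : ({x} : Finset α) ∉ insert A' (P.erase A) := by
    intro h
    rcases Finset.mem_insert.mp h with h | h
    · exact hsingA' h
    · exact hsingP (Finset.mem_of_mem_erase h)
  have hmemQ : ∀ B ∈ Q, B = {x} ∨ B = A' ∨ (B ∈ P ∧ B ≠ A) := by
    intro B hB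
    rcases Finset.mem_insert.mp hB with h | h
    · exact Or.inl h
    rcases Finset.mem_insert.mp h with h | h
    · exact Or.inr (Or.inl h)
    · exact Or.inr (Or.inr ⟨Finset.mem_of_mem_erase h, Finset.ne_of_mem_erase h⟩)
  have hdisjA : ∀ B ∈ P, B ≠ A → Disjoint A B := fun B hB h => hPd A hA B hB (Ne.symm h)
  refine ⟨Q, ⟨?_, ?_, ?_, ?_⟩, ?_⟩
  · rw [hQ, Finset.card_insert_of_notMem hsingnotE, Finset.card_insert_of_notMem hA'notE,
      Finset.card_erase_of_mem hA, hPc]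
    have h1 : 1 ≤ j := hPc ▸ Finset.card_pos.mpr ⟨A, hA⟩
    omega
  · intro B hB
    rcases hmemQ B hB with rfl | rfl | ⟨h, _⟩
    · exact Finset.singleton_nonempty x
    · exact hA'ne
    · exact hPne B h
  · intro B hB C hC hBC
    have key : ∀ B, (B = {x} ∨ B = A' ∨ (B ∈ P ∧ B ≠ A)) → ∀ C, (C = {x} ∨ C = A' ∨ (C ∈ P ∧ C ≠ A)) → B ≠ C → Disjoint B C := by
      rintro B (rfl | rfl | ⟨hB', hBA⟩) C (rfl | rfl | ⟨hC', hCA⟩) hne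
      · exact absurd rfl hne
      · exact Finset.disjoint_left.mpr fun a ha ha' => by
          rw [Finset.mem_singleton] at ha; subst ha; exact hxA'not ha'
      · exact Finset.disjoint_left.mpr fun a ha ha' => by
          rw [Finset.mem_singleton] at ha; subst ha
          exact Finset.disjoint_left.mp (hdisjA C hC' hCA) hxA ha'
      · exact Finset.disjoint_right.mpr fun a ha ha' => by
          rw [Finset.mem_singleton] at ha; subst ha; exact hxA'not ha'
      · exact absurd rfl hne
      · exact Finset.disjoint_left.mpr fun a ha ha' =>
          Finset.disjoint_left.mp (hdisjA C hC' hCA) (hA'sub ha) ha'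
      · exact Finset.disjoint_right.mpr fun a ha ha' => by
          rw [Finset.mem_singleton] at ha; subst ha
          exact Finset.disjoint_left.mp (hdisjA B hB' hBA) hxA ha'
      · exact Finset.disjoint_right.mpr fun a ha ha' =>
          Finset.disjoint_left.mp (hdisjA B hB' hBA) (hA'sub ha) ha'
      · exact hPd B hB' C hC' hne
    exact key B (hmemQ B hB) C (hmemQ C hC) hBC
  · ext a
    rw [Finset.mem_sup]
    constructor
    · rintro ⟨B, hB, haB⟩
      simp only [id_eq] at haB
      rcases hmemQ B hB with rfl | rfl | ⟨h, _⟩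
      · rw [Finset.mem_singleton] at haB; subst haB; exact hxsub A hA hxA
      · exact hxsub A hA (hA'sub haB)
      · exact hxsub B h haB
    · intro ha
      rw [← hPs, Finset.mem_sup] at ha
      obtain ⟨B, hB, haB⟩ := ha
      by_cases hBA : B = A
      · subst hBA
        by_cases hax : a = x
        · exact ⟨{x}, Finset.mem_insert_self _ _, by simp [hax]⟩
        · exact ⟨A', Finset.mem_insert.mpr (Or.inr (Finset.mem_insert_self _ _)),
            Finset.mem_erase.mpr ⟨hax, haB⟩⟩
      · exact ⟨B, Finset.mem_insert.mpr (Or.inr (Finset.mem_insert.mpr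
          (Or.inr (Finset.mem_erase.mpr ⟨hBA, hB⟩)))), haB⟩
  · unfold critVal
    rw [hQ, Finset.sum_insert hsingnotE, Finset.sum_insert hA'notE, band_singleton]
    have hsplit : ∑ B ∈ P, band κ B = band κ A + ∑ B ∈ P.erase A, band κ B :=
      (Finset.add_sum_erase P (band κ) hA).symm
    have : band κ A' ≤ band κ A := band_mono κ hA'sub
    linarith

lemma refine_many {α : Type*} [DecidableEq α] (κ : α → ℝ) {T : Finset α} :
    ∀ (m : ℕ) (j : ℕ) (P : Finset (Finset α)), IsPartition T j P → j + m ≤ T.card →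
      ∃ Q, IsPartition T (j + m) Q ∧ critVal κ Q ≤ critVal κ P := by
  intro m
  induction m with
  | zero => intro j P hP _; exact ⟨P, hP, le_refl _⟩
  | succ m ih =>
    intro j P hP hm
    obtain ⟨Q, hQ, hle⟩ := ih j P hP (by omega)
    obtain ⟨R, hR, hle'⟩ := refine_partition κ hQ (by omega)
    exact ⟨R, by rwa [show j + (m+1) = (j + m) + 1 by omega], le_trans hle' hle⟩

/-- Restricting to a nonempty subset does not increase the cluster structure function:
for `T ⊆ S` nonempty and `1 ≤ k ≤ |T|`, `H_T(k) ≤ H_S(k)`. -/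
theorem stmt_7 {α : Type*} [DecidableEq α] (S : Finset α) (hS : S.Nonempty) (κ : α → ℝ)
    (T : Finset α) (hTS : T ⊆ S) (hT : T.Nonempty) :
    ∀ k, 1 ≤ k → k ≤ T.card → csf T κ k ≤ csf S κ k := by
  intro k hk1 hkT
  have hkS : k ≤ S.card := le_trans hkT (Finset.card_le_card hTS)
  obtain ⟨P₀, hP₀⟩ := exists_partition (α := α) k S hk1 hkS
  -- S-set nonempty
  have hSne : {r : ℝ | ∃ P : Finset (Finset α), IsPartition S k P ∧ r = critVal κ P}.Nonempty :=
    ⟨critVal κ P₀, P₀, hP₀, rfl⟩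
  have hbdd : BddBelow {r : ℝ | ∃ P : Finset (Finset α), IsPartition T k P ∧ r = critVal κ P} := by
    refine ⟨0, ?_⟩
    rintro r ⟨P, _, rfl⟩
    exact Finset.sum_nonneg fun A _ => band_nonneg κ A
  apply le_csInf hSne
  rintro r ⟨P, hP, rfl⟩
  obtain ⟨j, Q, hj1, hjk, hQ, hle⟩ := restrict_partition κ hTS hT hP
  obtain ⟨R, hR, hle'⟩ := refine_many κ (k - j) j Q hQ (by omega)
  rw [show j + (k - j) = k by omega] at hR
  have : csf T κ k ≤ critVal κ R := csInf_le hbdd ⟨R, hR, rfl⟩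
  calc csf T κ k ≤ critVal κ R := this
    _ ≤ critVal κ Q := hle'
    _ ≤ critVal κ P := hle
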